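/- Let (V̄, Ē) be a finite oriented graph with internal vertices V, boundary vertices ∂V, edge set Ē = E ∪ ∂E, and boundary temperatures T_j > 0 for j ∈ ∂V. Fix O ∈ ℝ₊^V̄ with O_j = T_j for all j ∈ ∂V and K ∈ ℕ₀^V̄. Let D(O, K) := ∏_{i∈V̄} O_i^{K_i}. Then the duality identity L^O [O ↦ D(O, K)](O) = L^K_0 [K ↦ D(O, K)](K) holds, where L^O acts on the O variables and L^K_0 (the discrete KMP generator with absorbing boundary) acts on the K variables. -/

import Mathlib

open MeasureTheory Finset

noncomputable section

/-- Update two coordinates of a configuration. -/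
def upd2 {V : Type*} [DecidableEq V] {α : Type*} (x : V → α) (i j : V) (a b : α) : V → α :=
  Function.update (Function.update x i a) j b

/-- Generator of the opinion model on the edge set `Ebar`, with stubborn individuals at
the boundary vertices `bd`. -/
noncomputable def LO {V : Type*} [Fintype V] [DecidableEq V]
    (Ebar : Finset (V × V)) (bd : Finset V)
    (f : (V → ℝ) → ℝ) (O : V → ℝ) : ℝ :=
  ∑ e ∈ Ebar, ∫ v in (0:ℝ)..1,
    (f (fun ℓ => if (ℓ = e.1 ∨ ℓ = e.2) ∧ ℓ ∉ bd
          then v * O e.1 + (1 - v) * O e.2 else O ℓ) - f O)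

/-- Generator of the discrete KMP process with particles absorbed at the boundary. -/
noncomputable def LK0 {V : Type*} [Fintype V] [DecidableEq V]
    (Eint Ebd : Finset (V × V)) (f : (V → ℕ) → ℝ) (k : V → ℕ) : ℝ :=
  (∑ e ∈ Eint, (1 / (k e.1 + k e.2 + 1 : ℝ)) *
      ∑ h ∈ Finset.range (k e.1 + k e.2 + 1),
        (f (upd2 k e.1 e.2 h (k e.1 + k e.2 - h)) - f k))
  + ∑ e ∈ Ebd, (1 / (k e.1 + 1 : ℝ)) *
      ∑ h ∈ Finset.range (k e.1 + 1),
        (f (upd2 k e.1 e.2 h (k e.1 + k e.2 - h)) - f k)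

lemma keyint (A B : ℝ) (n : ℕ) :
    ∫ v in (0:ℝ)..1, (v*A + (1-v)*B)^n
      = (1/((n:ℝ)+1)) * ∑ h ∈ Finset.range (n+1), A^h * B^(n-h) := by
  have hn : ((n:ℝ)+1) ≠ 0 := by positivity
  rcases eq_or_ne A B with rfl | hAB
  · have h1 : ∀ v : ℝ, (v*A + (1-v)*A)^n = A^n := fun v => by
      rw [show v*A + (1-v)*A = A by ring]
    simp only [h1]
    rw [intervalIntegral.integral_const]
    rw [Finset.sum_congr rfl (fun h hh => by
      rw [← pow_add, Nat.add_sub_cancel' (Nat.lt_succ_iff.mp (Finset.mem_range.mp hh))])]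
    rw [Finset.sum_const, Finset.card_range, nsmul_eq_mul]
    push_cast
    field_simp
    simp
  · have h1 : ∀ v : ℝ, v*A+(1-v)*B = (A-B)*v + B := fun v => by ring
    simp only [h1]
    rw [intervalIntegral.integral_comp_mul_add (fun x => x^n) (sub_ne_zero.mpr hAB) B]
    rw [show (A-B)*0+B = B by ring, show (A-B)*1+B = A by ring, integral_pow]
    have hg := geom_sum₂_mul A B (n+1)
    simp only [Nat.add_sub_cancel] at hg
    rw [smul_eq_mul, ← hg]
    have h2 : A - B ≠ 0 := sub_ne_zero.mpr hAB
    field_simp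

lemma prod_split {V : Type*} [Fintype V] [DecidableEq V] (i j : V) (hij : i ≠ j) (x : V → ℝ) :
    ∏ ℓ, x ℓ = x i * x j * ∏ ℓ ∈ (Finset.univ.erase i).erase j, x ℓ := by
  rw [mul_assoc, Finset.mul_prod_erase _ _ (Finset.mem_erase.mpr ⟨hij.symm, Finset.mem_univ j⟩),
    Finset.mul_prod_erase _ _ (Finset.mem_univ i)]

/-- duality between the opinion model and the absorbed discrete KMP process:
`L^O D(·, K)(O) = L^K_0 D(O, ·)(K)` for the duality function `D(O,K) = ∏ᵢ Oᵢ^{Kᵢ}`. -/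
theorem opinion_discreteKMP_duality
    {V : Type*} [Fintype V] [DecidableEq V]
    (bd : Finset V) (Eint Ebd : Finset (V × V)) (T : V → ℝ)
    (hE : ∀ e ∈ Eint, e.1 ∉ bd ∧ e.2 ∉ bd ∧ e.1 ≠ e.2)
    (hEb : ∀ e ∈ Ebd, e.1 ∉ bd ∧ e.2 ∈ bd)
    (hdisj : Disjoint Eint Ebd)
    (hT : ∀ j ∈ bd, 0 < T j)
    (O : V → ℝ) (hO : ∀ i, 0 ≤ O i) (hObd : ∀ j ∈ bd, O j = T j)
    (K : V → ℕ) :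
    LO (Eint ∪ Ebd) bd (fun O' => ∏ i, (O' i) ^ (K i)) O
      = LK0 Eint Ebd (fun K' => ∏ i, (O i) ^ (K' i)) K := by
  classical
  unfold LO LK0
  rw [Finset.sum_union hdisj]
  congr 1
  · apply Finset.sum_congr rfl
    intro e he
    obtain ⟨hi, hj, hij⟩ := hE e he
    set C := ∏ ℓ ∈ (Finset.univ.erase e.1).erase e.2, O ℓ ^ K ℓ with hC
    have hfull : ∏ ℓ, O ℓ ^ K ℓ = O e.1 ^ K e.1 * O e.2 ^ K e.2 * C :=
      prod_split e.1 e.2 hij _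
    have hx : ∀ v : ℝ,
        (∏ ℓ, (if (ℓ = e.1 ∨ ℓ = e.2) ∧ ℓ ∉ bd then v * O e.1 + (1-v) * O e.2 else O ℓ) ^ K ℓ)
          = (v * O e.1 + (1-v) * O e.2) ^ (K e.1 + K e.2) * C := by
      intro v
      rw [prod_split e.1 e.2 hij, if_pos ⟨Or.inl rfl, hi⟩, if_pos ⟨Or.inr rfl, hj⟩, ← pow_add]
      congr 1
      rw [hC]
      refine Finset.prod_congr rfl fun ℓ hℓ => ?_
      have h2 := Finset.mem_erase.mp hℓ
      have h1 := (Finset.mem_erase.mp h2.2).1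
      rw [if_neg]
      rintro ⟨h | h, -⟩
      · exact h1 h
      · exact h2.1 h
    rw [intervalIntegral.integral_congr
      (g := fun v => ((v * O e.1 + (1-v) * O e.2) ^ (K e.1 + K e.2)
          - O e.1 ^ K e.1 * O e.2 ^ K e.2) * C)
      (fun v _ => by simp only [hx v, hfull]; ring)]
    have hI1 : IntervalIntegrable (fun v : ℝ => (v * O e.1 + (1-v) * O e.2) ^ (K e.1 + K e.2))
        MeasureTheory.volume 0 1 := (by fun_prop : Continuous _).intervalIntegrable _ _
    rw [intervalIntegral.integral_mul_const,
      intervalIntegral.integral_sub hI1 intervalIntegrable_const, keyint,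
      intervalIntegral.integral_const]
    have hupd : ∀ h ∈ Finset.range (K e.1 + K e.2 + 1),
        (∏ ℓ, O ℓ ^ (upd2 K e.1 e.2 h (K e.1 + K e.2 - h) ℓ)
          - ∏ ℓ, O ℓ ^ K ℓ)
        = O e.1 ^ h * O e.2 ^ (K e.1 + K e.2 - h) * C
          - O e.1 ^ K e.1 * O e.2 ^ K e.2 * C := by
      intro h _
      rw [hfull, prod_split e.1 e.2 hij (fun ℓ => O ℓ ^ (upd2 K e.1 e.2 h (K e.1 + K e.2 - h) ℓ))]
      have hA : upd2 K e.1 e.2 h (K e.1 + K e.2 - h) e.1 = h := by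
        rw [upd2, Function.update_of_ne hij, Function.update_self]
      have hB : upd2 K e.1 e.2 h (K e.1 + K e.2 - h) e.2 = K e.1 + K e.2 - h := by
        rw [upd2, Function.update_self]
      have hrest : (∏ ℓ ∈ (Finset.univ.erase e.1).erase e.2,
          O ℓ ^ (upd2 K e.1 e.2 h (K e.1 + K e.2 - h) ℓ)) = C := by
        rw [hC]
        refine Finset.prod_congr rfl fun ℓ hℓ => ?_
        have h2 := Finset.mem_erase.mp hℓ
        have h1 := (Finset.mem_erase.mp h2.2).1
        rw [upd2, Function.update_of_ne h2.1, Function.update_of_ne h1]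
      rw [hA, hB, hrest]
    rw [Finset.sum_congr rfl hupd, Finset.sum_sub_distrib, Finset.sum_const, Finset.card_range,
      ← Finset.sum_mul, nsmul_eq_mul, smul_eq_mul]
    have hn0 : ((K e.1 : ℝ) + (K e.2 : ℝ) + 1) ≠ 0 := by positivity
    push_cast
    field_simp
    ring
  · apply Finset.sum_congr rfl
    intro e he
    obtain ⟨hi, hb⟩ := hEb e he
    have hij : e.1 ≠ e.2 := fun h => hi (h ▸ hb)
    set C := ∏ ℓ ∈ (Finset.univ.erase e.1).erase e.2, O ℓ ^ K ℓ with hC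
    have hfull : ∏ ℓ, O ℓ ^ K ℓ = O e.1 ^ K e.1 * O e.2 ^ K e.2 * C :=
      prod_split e.1 e.2 hij _
    have hx : ∀ v : ℝ,
        (∏ ℓ, (if (ℓ = e.1 ∨ ℓ = e.2) ∧ ℓ ∉ bd then v * O e.1 + (1-v) * O e.2 else O ℓ) ^ K ℓ)
          = (v * O e.1 + (1-v) * O e.2) ^ (K e.1) * (O e.2 ^ K e.2 * C) := by
      intro v
      rw [prod_split e.1 e.2 hij, if_pos ⟨Or.inl rfl, hi⟩,
        if_neg (fun hc => hc.2 hb), mul_assoc]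
      congr 2
      rw [hC]
      refine Finset.prod_congr rfl fun ℓ hℓ => ?_
      have h2 := Finset.mem_erase.mp hℓ
      have h1 := (Finset.mem_erase.mp h2.2).1
      rw [if_neg]
      rintro ⟨h | h, -⟩
      · exact h1 h
      · exact h2.1 h
    rw [intervalIntegral.integral_congr
      (g := fun v => ((v * O e.1 + (1-v) * O e.2) ^ (K e.1) - O e.1 ^ K e.1)
          * (O e.2 ^ K e.2 * C))
      (fun v _ => by simp only [hx v, hfull]; ring)]
    have hI1 : IntervalIntegrable (fun v : ℝ => (v * O e.1 + (1-v) * O e.2) ^ (K e.1))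
        MeasureTheory.volume 0 1 := (by fun_prop : Continuous _).intervalIntegrable _ _
    rw [intervalIntegral.integral_mul_const,
      intervalIntegral.integral_sub hI1 intervalIntegrable_const, keyint,
      intervalIntegral.integral_const]
    have hupd : ∀ h ∈ Finset.range (K e.1 + 1),
        (∏ ℓ, O ℓ ^ (upd2 K e.1 e.2 h (K e.1 + K e.2 - h) ℓ)
          - ∏ ℓ, O ℓ ^ K ℓ)
        = O e.1 ^ h * O e.2 ^ (K e.1 - h) * (O e.2 ^ K e.2 * C)
          - O e.1 ^ K e.1 * O e.2 ^ K e.2 * C := by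
      intro h hh
      have hhK : h ≤ K e.1 := Nat.lt_succ_iff.mp (Finset.mem_range.mp hh)
      rw [hfull, prod_split e.1 e.2 hij (fun ℓ => O ℓ ^ (upd2 K e.1 e.2 h (K e.1 + K e.2 - h) ℓ))]
      have hA : upd2 K e.1 e.2 h (K e.1 + K e.2 - h) e.1 = h := by
        rw [upd2, Function.update_of_ne hij, Function.update_self]
      have hB : upd2 K e.1 e.2 h (K e.1 + K e.2 - h) e.2 = (K e.1 - h) + K e.2 := by
        rw [upd2, Function.update_self]; omega
      rw [hA, hB, pow_add]
      have hrest : (∏ ℓ ∈ (Finset.univ.erase e.1).erase e.2,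
          O ℓ ^ (upd2 K e.1 e.2 h (K e.1 + K e.2 - h) ℓ)) = C := by
        rw [hC]
        refine Finset.prod_congr rfl fun ℓ hℓ => ?_
        have h2 := Finset.mem_erase.mp hℓ
        have h1 := (Finset.mem_erase.mp h2.2).1
        rw [upd2, Function.update_of_ne h2.1, Function.update_of_ne h1]
      rw [hrest]
      ring
    rw [Finset.sum_congr rfl hupd, Finset.sum_sub_distrib, Finset.sum_const, Finset.card_range,
      ← Finset.sum_mul, nsmul_eq_mul, smul_eq_mul]
    have hn0 : ((K e.1 : ℝ) + 1) ≠ 0 := by positivity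
    push_cast
    field_simp
    ring

end
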